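/- Let g ∈ F[x] be a monic polynomial of degree t with no roots in E (in particular g(0) ≠ 0 and g(β^j) ≠ 0 for all j). Then for every c ∈ F^L: c ∈ C(g^{−1}, t) if and only if Σ_{l∈L} c_l · Σ_{j∈l} (x − β^j)^{−1} = 0 in the quotient ring E[x]/(g(x)), where (x − β^j)^{−1} denotes the inverse of x − β^j in E[x]/(g(x)) (which exists since g(β^j) ≠ 0). -/

import Mathlib

open Polynomial

noncomputable section

/-- The orbit of `j : ZMod N` under multiplication by `q`. -/
def qOrbit (N q : ℕ) (j : ZMod N) : Set (ZMod N) :=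
  Set.range fun k : ℕ => (q : ZMod N) ^ k * j

/-- The set `L` of orbits of `ZMod N` under multiplication by `q`. -/
def orbitSet (N q : ℕ) : Set (Set (ZMod N)) :=
  {l | ∃ j : ZMod N, l = qOrbit N q j}

/-- `β ^ j` for a residue class `j`. -/
def bpow {E : Type*} [Monoid E] {N : ℕ} (β : E) (j : ZMod N) : E :=
  β ^ j.val

/-- The check-matrix entry `h_{i l} = ∑_{j ∈ l} ρ(β^j) β^{i j}`, as an element of `E`. -/
def hEntry {F E : Type*} [CommSemiring F] [CommSemiring E] [Algebra F E] {N : ℕ}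
    (β : E) (ρ : Polynomial F) (i : ℕ) (l : Set (ZMod N)) : E :=
  ∑ᶠ j ∈ l, Polynomial.aeval (bpow β j) ρ * bpow β j ^ i

/-- The code `C(ρ, t)` inside `F^L`. -/
def codeSet (F E : Type*) [Field F] [Field E] [Algebra F E] (N q : ℕ)
    (β : E) (ρ : Polynomial F) (t : ℕ) : Set (↥(orbitSet N q) → F) :=
  {c | ∀ i < t, ∑ᶠ l : orbitSet N q,
    algebraMap F E (c l) * hEntry β ρ i (l : Set (ZMod N)) = 0}

open scoped Classical in
/-- `deg c = ∑_{l : c_l ≠ 0} |l|`. -/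
def wdeg {F : Type*} [Zero F] {N q : ℕ} (c : ↥(orbitSet N q) → F) : ℕ :=
  ∑ᶠ l : orbitSet N q, if c l ≠ 0 then (l : Set (ZMod N)).ncard else 0

open Finset

def Qaux {E : Type*} [CommRing E] (p : Polynomial E) (b : E) : Polynomial E :=
  ∑ k ∈ Finset.range (p.natDegree + 1), C (p.coeff k) * ∑ i ∈ Finset.range k, X ^ i * C b ^ (k - 1 - i)

lemma Qaux_mul {E : Type*} [CommRing E] (p : Polynomial E) (b : E) :
    (X - C b) * Qaux p b = p - C (p.eval b) := by
  have h1 : p = ∑ k ∈ range (p.natDegree+1), C (p.coeff k) * X ^ k := by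
    conv_lhs => rw [p.as_sum_range' _ (Nat.lt_succ_self _)]
    simp [C_mul_X_pow_eq_monomial]
  have h2 : p.eval b = ∑ k ∈ range (p.natDegree+1), p.coeff k * b ^ k := eval_eq_sum_range b
  have h3 : ∀ k ∈ range (p.natDegree+1),
      (X - C b) * (C (p.coeff k) * ∑ i ∈ Finset.range k, X ^ i * C b ^ (k - 1 - i))
      = C (p.coeff k) * X ^ k - C (p.coeff k * b ^ k) := by
    intro k _
    rw [mul_left_comm, mul_comm (X - C b), geom_sum₂_mul, mul_sub, C_mul, C_pow]
  rw [Qaux, Finset.mul_sum, Finset.sum_congr rfl h3, Finset.sum_sub_distrib, ← h1, h2, map_sum]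

lemma Qaux_coeff {E : Type*} [CommRing E] (p : Polynomial E) (b : E) (i : ℕ) :
    (Qaux p b).coeff i = ∑ s ∈ range (p.natDegree - i), p.coeff (i+1+s) * b ^ s := by
  rw [Qaux, finset_sum_coeff]
  have hterm : ∀ k, (C (p.coeff k) * ∑ i' ∈ Finset.range k, X ^ i' * C b ^ (k - 1 - i')).coeff i
      = if i < k then p.coeff k * b ^ (k - 1 - i) else 0 := by
    intro k
    rw [coeff_C_mul, finset_sum_coeff]
    simp only [← C_pow, coeff_mul_C, coeff_X_pow, ite_mul, one_mul, zero_mul]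
    simp [Finset.sum_ite_eq, Finset.mem_range, mul_ite]
  simp only [hterm]
  rw [← Finset.sum_filter]
  have hfil : (range (p.natDegree + 1)).filter (fun k => i < k) = Finset.Ico (i+1) (p.natDegree+1) := by
    ext k; simp [Finset.mem_filter, Finset.mem_range, Finset.mem_Ico]; omega
  rw [hfil, Finset.sum_Ico_eq_sum_range]
  rw [show p.natDegree + 1 - (i + 1) = p.natDegree - i from by omega]
  refine Finset.sum_congr rfl fun s _ => ?_
  rw [show i + 1 + s - 1 - i = s from by omega]

lemma tri_aux {E : Type*} [Field E] (t : ℕ) (a H : ℕ → E) (ha : a t = 1)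
    (h : ∀ i < t, ∑ s ∈ Finset.range (t - i), a (i+1+s) * H s = 0) :
    ∀ s < t, H s = 0 := by
  intro s
  induction s using Nat.strong_induction_on with
  | _ s ih =>
    intro hs
    have hi := h (t - 1 - s) (by omega)
    have hts : t - (t - 1 - s) = s + 1 := by omega
    rw [hts, Finset.sum_range_succ] at hi
    have h1 : ∀ s' ∈ Finset.range s, a (t-1-s+1+s') * H s' = 0 := by
      intro s' hs'
      have h2 := Finset.mem_range.mp hs'
      rw [ih s' h2 (by omega), mul_zero]
    rw [Finset.sum_eq_zero h1, zero_add] at hi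
    have h2 : t - 1 - s + 1 + s = t := by omega
    rwa [h2, ha, one_mul] at hi

/-- For a monic `g ∈ F[x]` of degree `t` with no roots in `E` and inverse `g⁻¹` modulo
`x^{q^m−1} − 1`:  `c ∈ C(g⁻¹, t)` if and only if
`∑_{l∈L} c_l ∑_{j∈l} (x − β^j)⁻¹ = 0` in `E[x]/(g)`. -/
theorem codeC_goppa_description (q m : ℕ) (hm : 0 < m) (hqm : Nat.Coprime q m)
    (F E : Type*) [Field F] [Field E] [Fintype F] [Fintype E] [Algebra F E]
    (hF : Fintype.card F = q) (hE : Fintype.card E = q ^ m)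
    (β : E) (hβ : orderOf β = q ^ m - 1) (t : ℕ) (ht : 0 < t)
    (g : Polynomial F) (hgm : g.Monic) (hgt : g.natDegree = t)
    (hgroots : ∀ x : E, Polynomial.aeval x g ≠ 0)
    (ginv : Polynomial F) (hginvdeg : ginv.degree < ((q ^ m - 1 : ℕ) : WithBot ℕ))
    (hginv : (X : Polynomial F) ^ (q ^ m - 1) - 1 ∣ g * ginv - 1) :
    ∀ c : ↥(orbitSet (q ^ m - 1) q) → F,
      c ∈ codeSet F E (q ^ m - 1) q β ginv t ↔
      ∑ᶠ l : orbitSet (q ^ m - 1) q,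
        Ideal.Quotient.mk (Ideal.span {g.map (algebraMap F E)})
            (Polynomial.C (algebraMap F E (c l))) *
          ∑ᶠ j ∈ (l : Set (ZMod (q ^ m - 1))),
            Ring.inverse (Ideal.Quotient.mk (Ideal.span {g.map (algebraMap F E)})
              (Polynomial.X - Polynomial.C (bpow β j))) = 0 := by
  classical
  have hq1 : 1 < q := hF ▸ Fintype.one_lt_card
  set N := q ^ m - 1 with hNdef
  have hN : 0 < N := by
    have := Nat.one_lt_pow hm.ne' hq1
    omega
  haveI : NeZero N := ⟨hN.ne'⟩
  haveI : Fintype ↥(orbitSet N q) := Fintype.ofFinite _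
  set φ := algebraMap F E with hφ
  set gE := g.map φ with hgE
  set I := Ideal.span {gE} with hI
  set π := Ideal.Quotient.mk I with hπ
  intro c
  have hβN : β ^ N = 1 := by rw [← hβ]; exact pow_orderOf_eq_one β
  have hgEm : gE.Monic := hgm.map φ
  have hgEnd : gE.natDegree = t := by rw [hgE, hgm.natDegree_map, hgt]
  have hgEdeg : gE.degree = (t : WithBot ℕ) := by
    rw [Polynomial.degree_eq_natDegree hgEm.ne_zero, hgEnd]
  have hgEt1 : gE.coeff t = 1 := by rw [← hgEnd]; exact hgEm.coeff_natDegree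
  have heval : ∀ x : E, gE.eval x = aeval x g := fun x => by rw [hgE, eval_map, aeval_def]
  have hgeval : ∀ x : E, gE.eval x ≠ 0 := fun x => by rw [heval]; exact hgroots x
  set e : ZMod N → E := fun j => gE.eval (bpow β j) with he
  have hbN : ∀ j : ZMod N, bpow β j ^ N = 1 := fun j => by
    rw [bpow, ← pow_mul, mul_comm, pow_mul, hβN, one_pow]
  have hginv_eval : ∀ j : ZMod N, aeval (bpow β j) ginv = (e j)⁻¹ := by
    intro j
    obtain ⟨u, hu⟩ := hginv
    have h := congrArg (aeval (bpow β j)) hu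
    simp only [map_sub, map_mul, map_one, map_pow, aeval_X] at h
    rw [hbN j, sub_self, zero_mul, sub_eq_zero] at h
    have h2 : gE.eval (bpow β j) * aeval (bpow β j) ginv = 1 := by rw [heval]; exact h
    exact eq_inv_of_mul_eq_one_right h2
  set Q : ZMod N → Polynomial E := fun j => C (-(e j)⁻¹) * Qaux gE (bpow β j) with hQ
  have hkey : ∀ j, π (X - C (bpow β j)) * π (Q j) = 1 := by
    intro j
    rw [← map_mul]
    have h1 : (X - C (bpow β j)) * Q j = C (-(e j)⁻¹) * gE - C (-(e j)⁻¹ * e j) := by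
      show (X - C (bpow β j)) * (C (-(e j)⁻¹) * Qaux gE (bpow β j)) = _
      rw [mul_left_comm, Qaux_mul, mul_sub, ← map_mul]
    have hπg : π gE = 0 := by
      rw [hπ, hI]
      exact (Ideal.Quotient.eq_zero_iff_dvd _ _).mpr dvd_rfl
    rw [h1, map_sub, map_mul, hπg, mul_zero, zero_sub, neg_mul, inv_mul_cancel₀ (hgeval (bpow β j)), map_neg, map_one, map_neg, neg_neg]
    exact map_one π
  have hunit : ∀ j, IsUnit (π (X - C (bpow β j))) := fun j => IsUnit.of_mul_eq_one _ (hkey j)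
  have hinv : ∀ j, Ring.inverse (π (X - C (bpow β j))) = π (Q j) := by
    intro j
    calc Ring.inverse (π (X - C (bpow β j)))
        = Ring.inverse (π (X - C (bpow β j))) * (π (X - C (bpow β j)) * π (Q j)) := by
          rw [hkey j, mul_one]
      _ = (Ring.inverse (π (X - C (bpow β j))) * π (X - C (bpow β j))) * π (Q j) := by ring
      _ = π (Q j) := by rw [Ring.inverse_mul_cancel _ (hunit j), one_mul]
  set T : ↥(orbitSet N q) → Finset (ZMod N) := fun l => (Set.toFinite (l : Set (ZMod N))).toFinset with hT
  set H : ℕ → E := fun s => ∑ l : ↥(orbitSet N q), φ (c l) * ∑ j ∈ T l, (e j)⁻¹ * bpow β j ^ s with hH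
  set P : Polynomial E := ∑ l : ↥(orbitSet N q), C (φ (c l)) * ∑ j ∈ T l, Q j with hP
  have hmem : c ∈ codeSet F E N q β ginv t ↔ ∀ i < t, H i = 0 := by
    unfold codeSet
    simp only [Set.mem_setOf_eq]
    refine forall₂_congr fun i hi => ?_
    rw [finsum_eq_sum_of_fintype]
    have h1 : ∀ l : ↥(orbitSet N q), φ (c l) * hEntry β ginv i (l : Set (ZMod N))
        = φ (c l) * ∑ j ∈ T l, (e j)⁻¹ * bpow β j ^ i := by
      intro l
      rw [hEntry, finsum_mem_eq_finite_toFinset_sum _ (Set.toFinite _)]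
      congr 1
      exact Finset.sum_congr rfl fun j _ => by rw [hginv_eval j]
    rw [Finset.sum_congr rfl fun l _ => h1 l, hH]
  have hRHS : (∑ᶠ l : orbitSet N q,
      π (C (φ (c l))) * ∑ᶠ j ∈ (l : Set (ZMod N)), Ring.inverse (π (X - C (bpow β j)))) = π P := by
    rw [finsum_eq_sum_of_fintype, hP, map_sum]
    refine Finset.sum_congr rfl fun l _ => ?_
    rw [map_mul, map_sum]
    congr 1
    rw [finsum_mem_eq_finite_toFinset_sum _ (Set.toFinite _)]
    exact Finset.sum_congr rfl fun j _ => hinv j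
  have hPco : ∀ i, P.coeff i = -∑ s ∈ range (t - i), gE.coeff (i+1+s) * H s := by
    intro i
    rw [hP, finset_sum_coeff]
    have h1 : ∀ l : ↥(orbitSet N q), (C (φ (c l)) * ∑ j ∈ T l, Q j).coeff i
        = ∑ j ∈ T l, ∑ s ∈ range (t - i),
            -(φ (c l) * ((e j)⁻¹ * (gE.coeff (i+1+s) * bpow β j ^ s))) := by
      intro l
      rw [coeff_C_mul, finset_sum_coeff, Finset.mul_sum]
      refine Finset.sum_congr rfl fun j _ => ?_
      rw [hQ]
      simp only
      rw [coeff_C_mul, Qaux_coeff, hgEnd, Finset.mul_sum, Finset.mul_sum]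
      refine Finset.sum_congr rfl fun s _ => ?_
      ring
    rw [Finset.sum_congr rfl fun l _ => h1 l]
    calc ∑ l : ↥(orbitSet N q), ∑ j ∈ T l, ∑ s ∈ range (t-i),
            -(φ (c l) * ((e j)⁻¹ * (gE.coeff (i+1+s) * bpow β j ^ s)))
        = ∑ l : ↥(orbitSet N q), ∑ s ∈ range (t-i), ∑ j ∈ T l,
            -(φ (c l) * ((e j)⁻¹ * (gE.coeff (i+1+s) * bpow β j ^ s))) :=
          Finset.sum_congr rfl fun l _ => Finset.sum_comm
      _ = ∑ s ∈ range (t-i), ∑ l : ↥(orbitSet N q), ∑ j ∈ T l,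
            -(φ (c l) * ((e j)⁻¹ * (gE.coeff (i+1+s) * bpow β j ^ s))) := Finset.sum_comm
      _ = -∑ s ∈ range (t - i), gE.coeff (i+1+s) * H s := by
          rw [← Finset.sum_neg_distrib]
          refine Finset.sum_congr rfl fun s _ => ?_
          rw [hH]
          simp only
          rw [Finset.mul_sum, ← Finset.sum_neg_distrib]
          refine Finset.sum_congr rfl fun l _ => ?_
          rw [Finset.mul_sum, Finset.mul_sum, ← Finset.sum_neg_distrib]
          refine Finset.sum_congr rfl fun j _ => ?_
          ring
  have hPco0 : ∀ i, t ≤ i → P.coeff i = 0 := fun i hi => by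
    rw [hPco i, show t - i = 0 from by omega, Finset.range_zero, Finset.sum_empty, neg_zero]
  have hPdeg : P.degree < gE.degree := by
    rw [hgEdeg]
    exact (degree_lt_iff_coeff_zero P t).mpr fun m' hm' => hPco0 m' hm'
  have hπP : π P = 0 ↔ P = 0 := by
    constructor
    · intro h0
      rw [hπ, hI, Ideal.Quotient.eq_zero_iff_dvd] at h0
      exact eq_zero_of_dvd_of_degree_lt h0 hPdeg
    · intro h0; rw [h0, map_zero]
  rw [hmem, hRHS, hπP]
  constructor
  · intro hc
    apply Polynomial.ext
    intro i
    rw [hPco i, coeff_zero]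
    have h1 : ∀ s ∈ range (t - i), gE.coeff (i+1+s) * H s = 0 := fun s hs => by
      have := Finset.mem_range.mp hs
      rw [hc s (by omega), mul_zero]
    rw [Finset.sum_eq_zero h1, neg_zero]
  · intro h0
    refine tri_aux t (fun k => gE.coeff k) H hgEt1 fun i hi => ?_
    have h2 : P.coeff i = 0 := by rw [h0, coeff_zero]
    rw [hPco i] at h2
    exact neg_eq_zero.mp h2
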